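/- For every positive integer N, one has S_{3,0}(N) = 3·S_{3,0}(⌊N/4⌋) + ν(N), where ν(N) = 0 if N ≡ 0, 7, 8, 9, 16, 17, 18, 22, 23 (mod 24); ν(N) = (−1)^{σ(N)} if N ≡ 3, 4, 10, 12, 20 (mod 24); ν(N) = (−1)^{σ(N)+1} if N ≡ 1, 2, 5, 6, 11, 19, 21 (mod 24); ν(N) = 2·(−1)^{σ(N)} if N ≡ 15 (mod 24); and ν(N) = 2·(−1)^{σ(N)+1} if N ≡ 13, 14 (mod 24). -/

import Mathlib

/-- binary digit sum -/
def sigma2 (n : ℕ) : ℕ := (Nat.digits 2 n).sum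

/-- `S m l x = Σ_{0 ≤ n < x, n ≡ l (mod m)} (−1)^{σ(n)}` -/
def S (m l x : ℕ) : ℤ :=
  ∑ n ∈ (Finset.range x).filter (fun n => n % m = l), (-1 : ℤ) ^ sigma2 n

/-- `Sint m l x y = S_{m,l}([x,y)) = S_{m,l}(y) − S_{m,l}(x)` -/
def Sint (m l x y : ℕ) : ℤ := S m l y - S m l x
/-- the correction term ν(N) of the fast computing algorithm -/
def nu (N : ℕ) : ℤ :=
  if N % 24 ∈ ({0, 7, 8, 9, 16, 17, 18, 22, 23} : Finset ℕ) then 0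
  else if N % 24 ∈ ({3, 4, 10, 12, 20} : Finset ℕ) then (-1) ^ sigma2 N
  else if N % 24 ∈ ({1, 2, 5, 6, 11, 19, 21} : Finset ℕ) then (-1) ^ (sigma2 N + 1)
  else if N % 24 = 15 then 2 * (-1) ^ sigma2 N
  else 2 * (-1) ^ (sigma2 N + 1)


lemma s2_even (n : ℕ) : sigma2 (2*n) = sigma2 n := by
  rcases Nat.eq_zero_or_pos n with rfl | h
  · rfl
  · unfold sigma2
    rw [Nat.digits_def' (by norm_num : 1 < 2) (by positivity),
      show 2*n % 2 = 0 by omega, show 2*n/2 = n by omega]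
    simp
lemma s2_odd (n : ℕ) : sigma2 (2*n+1) = sigma2 n + 1 := by
  unfold sigma2
  rw [Nat.digits_def' (by norm_num : 1 < 2) (by positivity),
    show (2*n+1) % 2 = 1 by omega, show (2*n+1)/2 = n by omega]
  simp [Nat.add_comm]
lemma s2_0 : sigma2 0 = 0 := by simp [sigma2]
lemma s2_1 : sigma2 1 = 1 := by rw [show (1:ℕ) = 2*0+1 from rfl, s2_odd, s2_0]
lemma key0 (n : ℕ) : sigma2 (4*n) = sigma2 n := by
  rw [show 4*n = 2*(2*n) by ring, s2_even, s2_even]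
lemma key1 (n : ℕ) : sigma2 (4*n+1) = sigma2 n + 1 := by
  rw [show 4*n+1 = 2*(2*n)+1 by ring, s2_odd, s2_even]
lemma key2 (n : ℕ) : sigma2 (4*n+2) = sigma2 n + 1 := by
  rw [show 4*n+2 = 2*(2*n+1) by ring, s2_even, s2_odd]
lemma key3 (n : ℕ) : sigma2 (4*n+3) = sigma2 n + 2 := by
  rw [show 4*n+3 = 2*(2*n+1)+1 by ring, s2_odd, s2_odd]
lemma s2_sueven (n : ℕ) : sigma2 (2*n+1) = sigma2 (2*n) + 1 := by rw [s2_odd, s2_even]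
lemma S_succ (m l x : ℕ) : S m l (x+1) = S m l x + if x % m = l then (-1:ℤ)^sigma2 x else 0 := by
  unfold S
  rw [Finset.range_add_one, Finset.filter_insert]
  split
  · rw [Finset.sum_insert (by simp)]; ring
  · ring
lemma S_add_four (N : ℕ) : S 3 0 (N+4) = S 3 0 N
    + (if N % 3 = 0 then (-1:ℤ)^sigma2 N else 0)
    + (if (N+1) % 3 = 0 then (-1:ℤ)^sigma2 (N+1) else 0)
    + (if (N+2) % 3 = 0 then (-1:ℤ)^sigma2 (N+2) else 0)
    + (if (N+3) % 3 = 0 then (-1:ℤ)^sigma2 (N+3) else 0) := by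
  rw [show N+4 = (N+3)+1 from rfl, S_succ, show N+3 = (N+2)+1 from rfl, S_succ,
    show N+2 = (N+1)+1 from rfl, S_succ, S_succ]
lemma s2_2 : sigma2 2 = 1 := by rw [show (2:ℕ) = 2*1 from rfl, s2_even, s2_1]
lemma s2_3 : sigma2 3 = 2 := by rw [show (3:ℕ) = 2*1+1 from rfl, s2_odd, s2_1]
set_option maxHeartbeats 2000000 in
lemma step (N : ℕ) :
    S 3 0 (N+4) = S 3 0 N + 3*(S 3 0 (N/4+1) - S 3 0 (N/4)) + (nu (N+4) - nu N) := by
  rcases (show N % 24 = 0 ∨ N % 24 = 1 ∨ N % 24 = 2 ∨ N % 24 = 3 ∨ N % 24 = 4 ∨ N % 24 = 5 ∨ N % 24 = 6 ∨ N % 24 = 7 ∨ N % 24 = 8 ∨ N % 24 = 9 ∨ N % 24 = 10 ∨ N % 24 = 11 ∨ N % 24 = 12 ∨ N % 24 = 13 ∨ N % 24 = 14 ∨ N % 24 = 15 ∨ N % 24 = 16 ∨ N % 24 = 17 ∨ N % 24 = 18 ∨ N % 24 = 19 ∨ N % 24 = 20 ∨ N % 24 = 21 ∨ N % 24 = 22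 ∨ N % 24 = 23 by omega) with h|h|h|h|h|h|h|h|h|h|h|h|h|h|h|h|h|h|h|h|h|h|h|h
  · obtain ⟨K, rfl⟩ : ∃ K, N = 24*K := ⟨N/24, by omega⟩
    have hd : (24*K)/4 = 6*K := by omega
    have e0 : sigma2 (24*K) = sigma2 (6*K) := by rw [show 24*K = 4*(6*K) by ring, key0]
    have e1 : sigma2 (24*K+1) = sigma2 (6*K) + 1 := by rw [show 24*K+1 = 4*(6*K)+1 by ring, key1]
    have e2 : sigma2 (24*K+2) = sigma2 (6*K) + 1 := by rw [show 24*K+2 = 4*(6*K)+2 by ring, key2]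
    have e3 : sigma2 (24*K+3) = sigma2 (6*K) + 2 := by rw [show 24*K+3 = 4*(6*K)+3 by ring, key3]
    have e4 : sigma2 (24*K+4) = sigma2 (6*K+1) := by rw [show 24*K+4 = 4*(6*K+1) by ring, key0]
    have ee : sigma2 (6*K+1) = sigma2 (6*K) + 1 := by rw [show 6*K+1 = 2*(3*K)+1 by ring, show 6*K = 2*(3*K) by ring, s2_odd, s2_even]
    rw [S_add_four, hd, S_succ 3 0 (6*K)]
    simp only [e0, e1, e2, e3, e4, ee, nu, (show (24*K) % 24 = 0 by omega), (show (24*K+4) % 24 = 4 by omega), (show (24*K) % 3 = 0 by omega), (show (24*K+1) % 3 = 1 by omega), (show (24*K+2) % 3 = 2 by omega), (show (24*K+3) % 3 = 0 by omega), (show (6*K) % 3 = 0 by omega)]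
    norm_num
    try ring
  · obtain ⟨K, rfl⟩ : ∃ K, N = 24*K+1 := ⟨N/24, by omega⟩
    have hd : (24*K+1)/4 = 6*K := by omega
    have e0 : sigma2 (24*K+1) = sigma2 (6*K) + 1 := by rw [show 24*K+1 = 4*(6*K)+1 by ring, key1]
    have e1 : sigma2 (24*K+1+1) = sigma2 (6*K) + 1 := by rw [show 24*K+1+1 = 4*(6*K)+2 by ring, key2]
    have e2 : sigma2 (24*K+1+2) = sigma2 (6*K) + 2 := by rw [show 24*K+1+2 = 4*(6*K)+3 by ring, key3]
    have e3 : sigma2 (24*K+1+3) = sigma2 (6*K+1) := by rw [show 24*K+1+3 = 4*(6*K+1) by ring, key0]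
    have e4 : sigma2 (24*K+1+4) = sigma2 (6*K+1) + 1 := by rw [show 24*K+1+4 = 4*(6*K+1)+1 by ring, key1]
    have ee : sigma2 (6*K+1) = sigma2 (6*K) + 1 := by rw [show 6*K+1 = 2*(3*K)+1 by ring, show 6*K = 2*(3*K) by ring, s2_odd, s2_even]
    rw [S_add_four, hd, S_succ 3 0 (6*K)]
    simp only [e0, e1, e2, e3, e4, ee, nu, (show (24*K+1) % 24 = 1 by omega), (show (24*K+1+4) % 24 = 5 by omega), (show (24*K+1) % 3 = 1 by omega), (show (24*K+1+1) % 3 = 2 by omega), (show (24*K+1+2) % 3 = 0 by omega), (show (24*K+1+3) % 3 = 1 by omega), (show (6*K) % 3 = 0 by omega)]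
    norm_num
    try ring
  · obtain ⟨K, rfl⟩ : ∃ K, N = 24*K+2 := ⟨N/24, by omega⟩
    have hd : (24*K+2)/4 = 6*K := by omega
    have e0 : sigma2 (24*K+2) = sigma2 (6*K) + 1 := by rw [show 24*K+2 = 4*(6*K)+2 by ring, key2]
    have e1 : sigma2 (24*K+2+1) = sigma2 (6*K) + 2 := by rw [show 24*K+2+1 = 4*(6*K)+3 by ring, key3]
    have e2 : sigma2 (24*K+2+2) = sigma2 (6*K+1) := by rw [show 24*K+2+2 = 4*(6*K+1) by ring, key0]
    have e3 : sigma2 (24*K+2+3) = sigma2 (6*K+1) + 1 := by rw [show 24*K+2+3 = 4*(6*K+1)+1 by ring, key1]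
    have e4 : sigma2 (24*K+2+4) = sigma2 (6*K+1) + 1 := by rw [show 24*K+2+4 = 4*(6*K+1)+2 by ring, key2]
    have ee : sigma2 (6*K+1) = sigma2 (6*K) + 1 := by rw [show 6*K+1 = 2*(3*K)+1 by ring, show 6*K = 2*(3*K) by ring, s2_odd, s2_even]
    rw [S_add_four, hd, S_succ 3 0 (6*K)]
    simp only [e0, e1, e2, e3, e4, ee, nu, (show (24*K+2) % 24 = 2 by omega), (show (24*K+2+4) % 24 = 6 by omega), (show (24*K+2) % 3 = 2 by omega), (show (24*K+2+1) % 3 = 0 by omega), (show (24*K+2+2) % 3 = 1 by omega), (show (24*K+2+3) % 3 = 2 by omega), (show (6*K) % 3 = 0 by omega)]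
    norm_num
    try ring
  · obtain ⟨K, rfl⟩ : ∃ K, N = 24*K+3 := ⟨N/24, by omega⟩
    have hd : (24*K+3)/4 = 6*K := by omega
    have e0 : sigma2 (24*K+3) = sigma2 (6*K) + 2 := by rw [show 24*K+3 = 4*(6*K)+3 by ring, key3]
    have e1 : sigma2 (24*K+3+1) = sigma2 (6*K+1) := by rw [show 24*K+3+1 = 4*(6*K+1) by ring, key0]
    have e2 : sigma2 (24*K+3+2) = sigma2 (6*K+1) + 1 := by rw [show 24*K+3+2 = 4*(6*K+1)+1 by ring, key1]
    have e3 : sigma2 (24*K+3+3) = sigma2 (6*K+1) + 1 := by rw [show 24*K+3+3 = 4*(6*K+1)+2 by ring, key2]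
    have e4 : sigma2 (24*K+3+4) = sigma2 (6*K+1) + 2 := by rw [show 24*K+3+4 = 4*(6*K+1)+3 by ring, key3]
    have ee : sigma2 (6*K+1) = sigma2 (6*K) + 1 := by rw [show 6*K+1 = 2*(3*K)+1 by ring, show 6*K = 2*(3*K) by ring, s2_odd, s2_even]
    rw [S_add_four, hd, S_succ 3 0 (6*K)]
    simp only [e0, e1, e2, e3, e4, ee, nu, (show (24*K+3) % 24 = 3 by omega), (show (24*K+3+4) % 24 = 7 by omega), (show (24*K+3) % 3 = 0 by omega), (show (24*K+3+1) % 3 = 1 by omega), (show (24*K+3+2) % 3 = 2 by omega), (show (24*K+3+3) % 3 = 0 by omega), (show (6*K) % 3 = 0 by omega)]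
    norm_num
    try ring
  · obtain ⟨K, rfl⟩ : ∃ K, N = 24*K+4 := ⟨N/24, by omega⟩
    have hd : (24*K+4)/4 = 6*K+1 := by omega
    have e0 : sigma2 (24*K+4) = sigma2 (6*K+1) := by rw [show 24*K+4 = 4*(6*K+1) by ring, key0]
    have e1 : sigma2 (24*K+4+1) = sigma2 (6*K+1) + 1 := by rw [show 24*K+4+1 = 4*(6*K+1)+1 by ring, key1]
    have e2 : sigma2 (24*K+4+2) = sigma2 (6*K+1) + 1 := by rw [show 24*K+4+2 = 4*(6*K+1)+2 by ring, key2]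
    have e3 : sigma2 (24*K+4+3) = sigma2 (6*K+1) + 2 := by rw [show 24*K+4+3 = 4*(6*K+1)+3 by ring, key3]
    have e4 : sigma2 (24*K+4+4) = sigma2 (6*K+2) := by rw [show 24*K+4+4 = 4*(6*K+2) by ring, key0]
    rw [S_add_four, hd, S_succ 3 0 (6*K+1)]
    simp only [e0, e1, e2, e3, e4, nu, (show (24*K+4) % 24 = 4 by omega), (show (24*K+4+4) % 24 = 8 by omega), (show (24*K+4) % 3 = 1 by omega), (show (24*K+4+1) % 3 = 2 by omega), (show (24*K+4+2) % 3 = 0 by omega), (show (24*K+4+3) % 3 = 1 by omega), (show (6*K+1) % 3 = 1 by omega)]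
    norm_num
    try ring
  · obtain ⟨K, rfl⟩ : ∃ K, N = 24*K+5 := ⟨N/24, by omega⟩
    have hd : (24*K+5)/4 = 6*K+1 := by omega
    have e0 : sigma2 (24*K+5) = sigma2 (6*K+1) + 1 := by rw [show 24*K+5 = 4*(6*K+1)+1 by ring, key1]
    have e1 : sigma2 (24*K+5+1) = sigma2 (6*K+1) + 1 := by rw [show 24*K+5+1 = 4*(6*K+1)+2 by ring, key2]
    have e2 : sigma2 (24*K+5+2) = sigma2 (6*K+1) + 2 := by rw [show 24*K+5+2 = 4*(6*K+1)+3 by ring, key3]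
    have e3 : sigma2 (24*K+5+3) = sigma2 (6*K+2) := by rw [show 24*K+5+3 = 4*(6*K+2) by ring, key0]
    have e4 : sigma2 (24*K+5+4) = sigma2 (6*K+2) + 1 := by rw [show 24*K+5+4 = 4*(6*K+2)+1 by ring, key1]
    rw [S_add_four, hd, S_succ 3 0 (6*K+1)]
    simp only [e0, e1, e2, e3, e4, nu, (show (24*K+5) % 24 = 5 by omega), (show (24*K+5+4) % 24 = 9 by omega), (show (24*K+5) % 3 = 2 by omega), (show (24*K+5+1) % 3 = 0 by omega), (show (24*K+5+2) % 3 = 1 by omega), (show (24*K+5+3) % 3 = 2 by omega), (show (6*K+1) % 3 = 1 by omega)]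
    norm_num
    try ring
  · obtain ⟨K, rfl⟩ : ∃ K, N = 24*K+6 := ⟨N/24, by omega⟩
    have hd : (24*K+6)/4 = 6*K+1 := by omega
    have e0 : sigma2 (24*K+6) = sigma2 (6*K+1) + 1 := by rw [show 24*K+6 = 4*(6*K+1)+2 by ring, key2]
    have e1 : sigma2 (24*K+6+1) = sigma2 (6*K+1) + 2 := by rw [show 24*K+6+1 = 4*(6*K+1)+3 by ring, key3]
    have e2 : sigma2 (24*K+6+2) = sigma2 (6*K+2) := by rw [show 24*K+6+2 = 4*(6*K+2) by ring, key0]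
    have e3 : sigma2 (24*K+6+3) = sigma2 (6*K+2) + 1 := by rw [show 24*K+6+3 = 4*(6*K+2)+1 by ring, key1]
    have e4 : sigma2 (24*K+6+4) = sigma2 (6*K+2) + 1 := by rw [show 24*K+6+4 = 4*(6*K+2)+2 by ring, key2]
    rw [S_add_four, hd, S_succ 3 0 (6*K+1)]
    simp only [e0, e1, e2, e3, e4, nu, (show (24*K+6) % 24 = 6 by omega), (show (24*K+6+4) % 24 = 10 by omega), (show (24*K+6) % 3 = 0 by omega), (show (24*K+6+1) % 3 = 1 by omega), (show (24*K+6+2) % 3 = 2 by omega), (show (24*K+6+3) % 3 = 0 by omega), (show (6*K+1) % 3 = 1 by omega)]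
    norm_num
    try ring
  · obtain ⟨K, rfl⟩ : ∃ K, N = 24*K+7 := ⟨N/24, by omega⟩
    have hd : (24*K+7)/4 = 6*K+1 := by omega
    have e0 : sigma2 (24*K+7) = sigma2 (6*K+1) + 2 := by rw [show 24*K+7 = 4*(6*K+1)+3 by ring, key3]
    have e1 : sigma2 (24*K+7+1) = sigma2 (6*K+2) := by rw [show 24*K+7+1 = 4*(6*K+2) by ring, key0]
    have e2 : sigma2 (24*K+7+2) = sigma2 (6*K+2) + 1 := by rw [show 24*K+7+2 = 4*(6*K+2)+1 by ring, key1]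
    have e3 : sigma2 (24*K+7+3) = sigma2 (6*K+2) + 1 := by rw [show 24*K+7+3 = 4*(6*K+2)+2 by ring, key2]
    have e4 : sigma2 (24*K+7+4) = sigma2 (6*K+2) + 2 := by rw [show 24*K+7+4 = 4*(6*K+2)+3 by ring, key3]
    rw [S_add_four, hd, S_succ 3 0 (6*K+1)]
    simp only [e0, e1, e2, e3, e4, nu, (show (24*K+7) % 24 = 7 by omega), (show (24*K+7+4) % 24 = 11 by omega), (show (24*K+7) % 3 = 1 by omega), (show (24*K+7+1) % 3 = 2 by omega), (show (24*K+7+2) % 3 = 0 by omega), (show (24*K+7+3) % 3 = 1 by omega), (show (6*K+1) % 3 = 1 by omega)]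
    norm_num
    try ring
  · obtain ⟨K, rfl⟩ : ∃ K, N = 24*K+8 := ⟨N/24, by omega⟩
    have hd : (24*K+8)/4 = 6*K+2 := by omega
    have e0 : sigma2 (24*K+8) = sigma2 (6*K+2) := by rw [show 24*K+8 = 4*(6*K+2) by ring, key0]
    have e1 : sigma2 (24*K+8+1) = sigma2 (6*K+2) + 1 := by rw [show 24*K+8+1 = 4*(6*K+2)+1 by ring, key1]
    have e2 : sigma2 (24*K+8+2) = sigma2 (6*K+2) + 1 := by rw [show 24*K+8+2 = 4*(6*K+2)+2 by ring, key2]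
    have e3 : sigma2 (24*K+8+3) = sigma2 (6*K+2) + 2 := by rw [show 24*K+8+3 = 4*(6*K+2)+3 by ring, key3]
    have e4 : sigma2 (24*K+8+4) = sigma2 (6*K+3) := by rw [show 24*K+8+4 = 4*(6*K+3) by ring, key0]
    have ee : sigma2 (6*K+3) = sigma2 (6*K+2) + 1 := by rw [show 6*K+3 = 2*(3*K+1)+1 by ring, show 6*K+2 = 2*(3*K+1) by ring, s2_odd, s2_even]
    rw [S_add_four, hd, S_succ 3 0 (6*K+2)]
    simp only [e0, e1, e2, e3, e4, ee, nu, (show (24*K+8) % 24 = 8 by omega), (show (24*K+8+4) % 24 = 12 by omega), (show (24*K+8) % 3 = 2 by omega), (show (24*K+8+1) % 3 = 0 by omega), (show (24*K+8+2) % 3 = 1 by omega), (show (24*K+8+3) % 3 = 2 by omega), (show (6*K+2) % 3 = 2 by omega)]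
    norm_num
    try ring
  · obtain ⟨K, rfl⟩ : ∃ K, N = 24*K+9 := ⟨N/24, by omega⟩
    have hd : (24*K+9)/4 = 6*K+2 := by omega
    have e0 : sigma2 (24*K+9) = sigma2 (6*K+2) + 1 := by rw [show 24*K+9 = 4*(6*K+2)+1 by ring, key1]
    have e1 : sigma2 (24*K+9+1) = sigma2 (6*K+2) + 1 := by rw [show 24*K+9+1 = 4*(6*K+2)+2 by ring, key2]
    have e2 : sigma2 (24*K+9+2) = sigma2 (6*K+2) + 2 := by rw [show 24*K+9+2 = 4*(6*K+2)+3 by ring, key3]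
    have e3 : sigma2 (24*K+9+3) = sigma2 (6*K+3) := by rw [show 24*K+9+3 = 4*(6*K+3) by ring, key0]
    have e4 : sigma2 (24*K+9+4) = sigma2 (6*K+3) + 1 := by rw [show 24*K+9+4 = 4*(6*K+3)+1 by ring, key1]
    have ee : sigma2 (6*K+3) = sigma2 (6*K+2) + 1 := by rw [show 6*K+3 = 2*(3*K+1)+1 by ring, show 6*K+2 = 2*(3*K+1) by ring, s2_odd, s2_even]
    rw [S_add_four, hd, S_succ 3 0 (6*K+2)]
    simp only [e0, e1, e2, e3, e4, ee, nu, (show (24*K+9) % 24 = 9 by omega), (show (24*K+9+4) % 24 = 13 by omega), (show (24*K+9) % 3 = 0 by omega), (show (24*K+9+1) % 3 = 1 by omega), (show (24*K+9+2) % 3 = 2 by omega), (show (24*K+9+3) % 3 = 0 by omega), (show (6*K+2) % 3 = 2 by omega)]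
    norm_num
    try ring
  · obtain ⟨K, rfl⟩ : ∃ K, N = 24*K+10 := ⟨N/24, by omega⟩
    have hd : (24*K+10)/4 = 6*K+2 := by omega
    have e0 : sigma2 (24*K+10) = sigma2 (6*K+2) + 1 := by rw [show 24*K+10 = 4*(6*K+2)+2 by ring, key2]
    have e1 : sigma2 (24*K+10+1) = sigma2 (6*K+2) + 2 := by rw [show 24*K+10+1 = 4*(6*K+2)+3 by ring, key3]
    have e2 : sigma2 (24*K+10+2) = sigma2 (6*K+3) := by rw [show 24*K+10+2 = 4*(6*K+3) by ring, key0]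
    have e3 : sigma2 (24*K+10+3) = sigma2 (6*K+3) + 1 := by rw [show 24*K+10+3 = 4*(6*K+3)+1 by ring, key1]
    have e4 : sigma2 (24*K+10+4) = sigma2 (6*K+3) + 1 := by rw [show 24*K+10+4 = 4*(6*K+3)+2 by ring, key2]
    have ee : sigma2 (6*K+3) = sigma2 (6*K+2) + 1 := by rw [show 6*K+3 = 2*(3*K+1)+1 by ring, show 6*K+2 = 2*(3*K+1) by ring, s2_odd, s2_even]
    rw [S_add_four, hd, S_succ 3 0 (6*K+2)]
    simp only [e0, e1, e2, e3, e4, ee, nu, (show (24*K+10) % 24 = 10 by omega), (show (24*K+10+4) % 24 = 14 by omega), (show (24*K+10) % 3 = 1 by omega), (show (24*K+10+1) % 3 = 2 by omega), (show (24*K+10+2) % 3 = 0 by omega), (show (24*K+10+3) % 3 = 1 by omega), (show (6*K+2) % 3 = 2 by omega)]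
    norm_num
    try ring
  · obtain ⟨K, rfl⟩ : ∃ K, N = 24*K+11 := ⟨N/24, by omega⟩
    have hd : (24*K+11)/4 = 6*K+2 := by omega
    have e0 : sigma2 (24*K+11) = sigma2 (6*K+2) + 2 := by rw [show 24*K+11 = 4*(6*K+2)+3 by ring, key3]
    have e1 : sigma2 (24*K+11+1) = sigma2 (6*K+3) := by rw [show 24*K+11+1 = 4*(6*K+3) by ring, key0]
    have e2 : sigma2 (24*K+11+2) = sigma2 (6*K+3) + 1 := by rw [show 24*K+11+2 = 4*(6*K+3)+1 by ring, key1]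
    have e3 : sigma2 (24*K+11+3) = sigma2 (6*K+3) + 1 := by rw [show 24*K+11+3 = 4*(6*K+3)+2 by ring, key2]
    have e4 : sigma2 (24*K+11+4) = sigma2 (6*K+3) + 2 := by rw [show 24*K+11+4 = 4*(6*K+3)+3 by ring, key3]
    have ee : sigma2 (6*K+3) = sigma2 (6*K+2) + 1 := by rw [show 6*K+3 = 2*(3*K+1)+1 by ring, show 6*K+2 = 2*(3*K+1) by ring, s2_odd, s2_even]
    rw [S_add_four, hd, S_succ 3 0 (6*K+2)]
    simp only [e0, e1, e2, e3, e4, ee, nu, (show (24*K+11) % 24 = 11 by omega), (show (24*K+11+4) % 24 = 15 by omega), (show (24*K+11) % 3 = 2 by omega), (show (24*K+11+1) % 3 = 0 by omega), (show (24*K+11+2) % 3 = 1 by omega), (show (24*K+11+3) % 3 = 2 by omega), (show (6*K+2) % 3 = 2 by omega)]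
    norm_num
    try ring
  · obtain ⟨K, rfl⟩ : ∃ K, N = 24*K+12 := ⟨N/24, by omega⟩
    have hd : (24*K+12)/4 = 6*K+3 := by omega
    have e0 : sigma2 (24*K+12) = sigma2 (6*K+3) := by rw [show 24*K+12 = 4*(6*K+3) by ring, key0]
    have e1 : sigma2 (24*K+12+1) = sigma2 (6*K+3) + 1 := by rw [show 24*K+12+1 = 4*(6*K+3)+1 by ring, key1]
    have e2 : sigma2 (24*K+12+2) = sigma2 (6*K+3) + 1 := by rw [show 24*K+12+2 = 4*(6*K+3)+2 by ring, key2]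
    have e3 : sigma2 (24*K+12+3) = sigma2 (6*K+3) + 2 := by rw [show 24*K+12+3 = 4*(6*K+3)+3 by ring, key3]
    have e4 : sigma2 (24*K+12+4) = sigma2 (6*K+4) := by rw [show 24*K+12+4 = 4*(6*K+4) by ring, key0]
    rw [S_add_four, hd, S_succ 3 0 (6*K+3)]
    simp only [e0, e1, e2, e3, e4, nu, (show (24*K+12) % 24 = 12 by omega), (show (24*K+12+4) % 24 = 16 by omega), (show (24*K+12) % 3 = 0 by omega), (show (24*K+12+1) % 3 = 1 by omega), (show (24*K+12+2) % 3 = 2 by omega), (show (24*K+12+3) % 3 = 0 by omega), (show (6*K+3) % 3 = 0 by omega)]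
    norm_num
    try ring
  · obtain ⟨K, rfl⟩ : ∃ K, N = 24*K+13 := ⟨N/24, by omega⟩
    have hd : (24*K+13)/4 = 6*K+3 := by omega
    have e0 : sigma2 (24*K+13) = sigma2 (6*K+3) + 1 := by rw [show 24*K+13 = 4*(6*K+3)+1 by ring, key1]
    have e1 : sigma2 (24*K+13+1) = sigma2 (6*K+3) + 1 := by rw [show 24*K+13+1 = 4*(6*K+3)+2 by ring, key2]
    have e2 : sigma2 (24*K+13+2) = sigma2 (6*K+3) + 2 := by rw [show 24*K+13+2 = 4*(6*K+3)+3 by ring, key3]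
    have e3 : sigma2 (24*K+13+3) = sigma2 (6*K+4) := by rw [show 24*K+13+3 = 4*(6*K+4) by ring, key0]
    have e4 : sigma2 (24*K+13+4) = sigma2 (6*K+4) + 1 := by rw [show 24*K+13+4 = 4*(6*K+4)+1 by ring, key1]
    rw [S_add_four, hd, S_succ 3 0 (6*K+3)]
    simp only [e0, e1, e2, e3, e4, nu, (show (24*K+13) % 24 = 13 by omega), (show (24*K+13+4) % 24 = 17 by omega), (show (24*K+13) % 3 = 1 by omega), (show (24*K+13+1) % 3 = 2 by omega), (show (24*K+13+2) % 3 = 0 by omega), (show (24*K+13+3) % 3 = 1 by omega), (show (6*K+3) % 3 = 0 by omega)]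
    norm_num
    try ring
  · obtain ⟨K, rfl⟩ : ∃ K, N = 24*K+14 := ⟨N/24, by omega⟩
    have hd : (24*K+14)/4 = 6*K+3 := by omega
    have e0 : sigma2 (24*K+14) = sigma2 (6*K+3) + 1 := by rw [show 24*K+14 = 4*(6*K+3)+2 by ring, key2]
    have e1 : sigma2 (24*K+14+1) = sigma2 (6*K+3) + 2 := by rw [show 24*K+14+1 = 4*(6*K+3)+3 by ring, key3]
    have e2 : sigma2 (24*K+14+2) = sigma2 (6*K+4) := by rw [show 24*K+14+2 = 4*(6*K+4) by ring, key0]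
    have e3 : sigma2 (24*K+14+3) = sigma2 (6*K+4) + 1 := by rw [show 24*K+14+3 = 4*(6*K+4)+1 by ring, key1]
    have e4 : sigma2 (24*K+14+4) = sigma2 (6*K+4) + 1 := by rw [show 24*K+14+4 = 4*(6*K+4)+2 by ring, key2]
    rw [S_add_four, hd, S_succ 3 0 (6*K+3)]
    simp only [e0, e1, e2, e3, e4, nu, (show (24*K+14) % 24 = 14 by omega), (show (24*K+14+4) % 24 = 18 by omega), (show (24*K+14) % 3 = 2 by omega), (show (24*K+14+1) % 3 = 0 by omega), (show (24*K+14+2) % 3 = 1 by omega), (show (24*K+14+3) % 3 = 2 by omega), (show (6*K+3) % 3 = 0 by omega)]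
    norm_num
    try ring
  · obtain ⟨K, rfl⟩ : ∃ K, N = 24*K+15 := ⟨N/24, by omega⟩
    have hd : (24*K+15)/4 = 6*K+3 := by omega
    have e0 : sigma2 (24*K+15) = sigma2 (6*K+3) + 2 := by rw [show 24*K+15 = 4*(6*K+3)+3 by ring, key3]
    have e1 : sigma2 (24*K+15+1) = sigma2 (6*K+4) := by rw [show 24*K+15+1 = 4*(6*K+4) by ring, key0]
    have e2 : sigma2 (24*K+15+2) = sigma2 (6*K+4) + 1 := by rw [show 24*K+15+2 = 4*(6*K+4)+1 by ring, key1]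
    have e3 : sigma2 (24*K+15+3) = sigma2 (6*K+4) + 1 := by rw [show 24*K+15+3 = 4*(6*K+4)+2 by ring, key2]
    have e4 : sigma2 (24*K+15+4) = sigma2 (6*K+4) + 2 := by rw [show 24*K+15+4 = 4*(6*K+4)+3 by ring, key3]
    rw [S_add_four, hd, S_succ 3 0 (6*K+3)]
    simp only [e0, e1, e2, e3, e4, nu, (show (24*K+15) % 24 = 15 by omega), (show (24*K+15+4) % 24 = 19 by omega), (show (24*K+15) % 3 = 0 by omega), (show (24*K+15+1) % 3 = 1 by omega), (show (24*K+15+2) % 3 = 2 by omega), (show (24*K+15+3) % 3 = 0 by omega), (show (6*K+3) % 3 = 0 by omega)]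
    norm_num
    try ring
  · obtain ⟨K, rfl⟩ : ∃ K, N = 24*K+16 := ⟨N/24, by omega⟩
    have hd : (24*K+16)/4 = 6*K+4 := by omega
    have e0 : sigma2 (24*K+16) = sigma2 (6*K+4) := by rw [show 24*K+16 = 4*(6*K+4) by ring, key0]
    have e1 : sigma2 (24*K+16+1) = sigma2 (6*K+4) + 1 := by rw [show 24*K+16+1 = 4*(6*K+4)+1 by ring, key1]
    have e2 : sigma2 (24*K+16+2) = sigma2 (6*K+4) + 1 := by rw [show 24*K+16+2 = 4*(6*K+4)+2 by ring, key2]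
    have e3 : sigma2 (24*K+16+3) = sigma2 (6*K+4) + 2 := by rw [show 24*K+16+3 = 4*(6*K+4)+3 by ring, key3]
    have e4 : sigma2 (24*K+16+4) = sigma2 (6*K+5) := by rw [show 24*K+16+4 = 4*(6*K+5) by ring, key0]
    have ee : sigma2 (6*K+5) = sigma2 (6*K+4) + 1 := by rw [show 6*K+5 = 2*(3*K+2)+1 by ring, show 6*K+4 = 2*(3*K+2) by ring, s2_odd, s2_even]
    rw [S_add_four, hd, S_succ 3 0 (6*K+4)]
    simp only [e0, e1, e2, e3, e4, ee, nu, (show (24*K+16) % 24 = 16 by omega), (show (24*K+16+4) % 24 = 20 by omega), (show (24*K+16) % 3 = 1 by omega), (show (24*K+16+1) % 3 = 2 by omega), (show (24*K+16+2) % 3 = 0 by omega), (show (24*K+16+3) % 3 = 1 by omega), (show (6*K+4) % 3 = 1 by omega)]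
    norm_num
    try ring
  · obtain ⟨K, rfl⟩ : ∃ K, N = 24*K+17 := ⟨N/24, by omega⟩
    have hd : (24*K+17)/4 = 6*K+4 := by omega
    have e0 : sigma2 (24*K+17) = sigma2 (6*K+4) + 1 := by rw [show 24*K+17 = 4*(6*K+4)+1 by ring, key1]
    have e1 : sigma2 (24*K+17+1) = sigma2 (6*K+4) + 1 := by rw [show 24*K+17+1 = 4*(6*K+4)+2 by ring, key2]
    have e2 : sigma2 (24*K+17+2) = sigma2 (6*K+4) + 2 := by rw [show 24*K+17+2 = 4*(6*K+4)+3 by ring, key3]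
    have e3 : sigma2 (24*K+17+3) = sigma2 (6*K+5) := by rw [show 24*K+17+3 = 4*(6*K+5) by ring, key0]
    have e4 : sigma2 (24*K+17+4) = sigma2 (6*K+5) + 1 := by rw [show 24*K+17+4 = 4*(6*K+5)+1 by ring, key1]
    have ee : sigma2 (6*K+5) = sigma2 (6*K+4) + 1 := by rw [show 6*K+5 = 2*(3*K+2)+1 by ring, show 6*K+4 = 2*(3*K+2) by ring, s2_odd, s2_even]
    rw [S_add_four, hd, S_succ 3 0 (6*K+4)]
    simp only [e0, e1, e2, e3, e4, ee, nu, (show (24*K+17) % 24 = 17 by omega), (show (24*K+17+4) % 24 = 21 by omega), (show (24*K+17) % 3 = 2 by omega), (show (24*K+17+1) % 3 = 0 by omega), (show (24*K+17+2) % 3 = 1 by omega), (show (24*K+17+3) % 3 = 2 by omega), (show (6*K+4) % 3 = 1 by omega)]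
    norm_num
    try ring
  · obtain ⟨K, rfl⟩ : ∃ K, N = 24*K+18 := ⟨N/24, by omega⟩
    have hd : (24*K+18)/4 = 6*K+4 := by omega
    have e0 : sigma2 (24*K+18) = sigma2 (6*K+4) + 1 := by rw [show 24*K+18 = 4*(6*K+4)+2 by ring, key2]
    have e1 : sigma2 (24*K+18+1) = sigma2 (6*K+4) + 2 := by rw [show 24*K+18+1 = 4*(6*K+4)+3 by ring, key3]
    have e2 : sigma2 (24*K+18+2) = sigma2 (6*K+5) := by rw [show 24*K+18+2 = 4*(6*K+5) by ring, key0]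
    have e3 : sigma2 (24*K+18+3) = sigma2 (6*K+5) + 1 := by rw [show 24*K+18+3 = 4*(6*K+5)+1 by ring, key1]
    have e4 : sigma2 (24*K+18+4) = sigma2 (6*K+5) + 1 := by rw [show 24*K+18+4 = 4*(6*K+5)+2 by ring, key2]
    have ee : sigma2 (6*K+5) = sigma2 (6*K+4) + 1 := by rw [show 6*K+5 = 2*(3*K+2)+1 by ring, show 6*K+4 = 2*(3*K+2) by ring, s2_odd, s2_even]
    rw [S_add_four, hd, S_succ 3 0 (6*K+4)]
    simp only [e0, e1, e2, e3, e4, ee, nu, (show (24*K+18) % 24 = 18 by omega), (show (24*K+18+4) % 24 = 22 by omega), (show (24*K+18) % 3 = 0 by omega), (show (24*K+18+1) % 3 = 1 by omega), (show (24*K+18+2) % 3 = 2 by omega), (show (24*K+18+3) % 3 = 0 by omega), (show (6*K+4) % 3 = 1 by omega)]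
    norm_num
    try ring
  · obtain ⟨K, rfl⟩ : ∃ K, N = 24*K+19 := ⟨N/24, by omega⟩
    have hd : (24*K+19)/4 = 6*K+4 := by omega
    have e0 : sigma2 (24*K+19) = sigma2 (6*K+4) + 2 := by rw [show 24*K+19 = 4*(6*K+4)+3 by ring, key3]
    have e1 : sigma2 (24*K+19+1) = sigma2 (6*K+5) := by rw [show 24*K+19+1 = 4*(6*K+5) by ring, key0]
    have e2 : sigma2 (24*K+19+2) = sigma2 (6*K+5) + 1 := by rw [show 24*K+19+2 = 4*(6*K+5)+1 by ring, key1]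
    have e3 : sigma2 (24*K+19+3) = sigma2 (6*K+5) + 1 := by rw [show 24*K+19+3 = 4*(6*K+5)+2 by ring, key2]
    have e4 : sigma2 (24*K+19+4) = sigma2 (6*K+5) + 2 := by rw [show 24*K+19+4 = 4*(6*K+5)+3 by ring, key3]
    have ee : sigma2 (6*K+5) = sigma2 (6*K+4) + 1 := by rw [show 6*K+5 = 2*(3*K+2)+1 by ring, show 6*K+4 = 2*(3*K+2) by ring, s2_odd, s2_even]
    rw [S_add_four, hd, S_succ 3 0 (6*K+4)]
    simp only [e0, e1, e2, e3, e4, ee, nu, (show (24*K+19) % 24 = 19 by omega), (show (24*K+19+4) % 24 = 23 by omega), (show (24*K+19) % 3 = 1 by omega), (show (24*K+19+1) % 3 = 2 by omega), (show (24*K+19+2) % 3 = 0 by omega), (show (24*K+19+3) % 3 = 1 by omega), (show (6*K+4) % 3 = 1 by omega)]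
    norm_num
    try ring
  · obtain ⟨K, rfl⟩ : ∃ K, N = 24*K+20 := ⟨N/24, by omega⟩
    have hd : (24*K+20)/4 = 6*K+5 := by omega
    have e0 : sigma2 (24*K+20) = sigma2 (6*K+5) := by rw [show 24*K+20 = 4*(6*K+5) by ring, key0]
    have e1 : sigma2 (24*K+20+1) = sigma2 (6*K+5) + 1 := by rw [show 24*K+20+1 = 4*(6*K+5)+1 by ring, key1]
    have e2 : sigma2 (24*K+20+2) = sigma2 (6*K+5) + 1 := by rw [show 24*K+20+2 = 4*(6*K+5)+2 by ring, key2]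
    have e3 : sigma2 (24*K+20+3) = sigma2 (6*K+5) + 2 := by rw [show 24*K+20+3 = 4*(6*K+5)+3 by ring, key3]
    have e4 : sigma2 (24*K+20+4) = sigma2 (6*K+6) := by rw [show 24*K+20+4 = 4*(6*K+6) by ring, key0]
    rw [S_add_four, hd, S_succ 3 0 (6*K+5)]
    simp only [e0, e1, e2, e3, e4, nu, (show (24*K+20) % 24 = 20 by omega), (show (24*K+20+4) % 24 = 0 by omega), (show (24*K+20) % 3 = 2 by omega), (show (24*K+20+1) % 3 = 0 by omega), (show (24*K+20+2) % 3 = 1 by omega), (show (24*K+20+3) % 3 = 2 by omega), (show (6*K+5) % 3 = 2 by omega)]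
    norm_num
    try ring
  · obtain ⟨K, rfl⟩ : ∃ K, N = 24*K+21 := ⟨N/24, by omega⟩
    have hd : (24*K+21)/4 = 6*K+5 := by omega
    have e0 : sigma2 (24*K+21) = sigma2 (6*K+5) + 1 := by rw [show 24*K+21 = 4*(6*K+5)+1 by ring, key1]
    have e1 : sigma2 (24*K+21+1) = sigma2 (6*K+5) + 1 := by rw [show 24*K+21+1 = 4*(6*K+5)+2 by ring, key2]
    have e2 : sigma2 (24*K+21+2) = sigma2 (6*K+5) + 2 := by rw [show 24*K+21+2 = 4*(6*K+5)+3 by ring, key3]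
    have e3 : sigma2 (24*K+21+3) = sigma2 (6*K+6) := by rw [show 24*K+21+3 = 4*(6*K+6) by ring, key0]
    have e4 : sigma2 (24*K+21+4) = sigma2 (6*K+6) + 1 := by rw [show 24*K+21+4 = 4*(6*K+6)+1 by ring, key1]
    rw [S_add_four, hd, S_succ 3 0 (6*K+5)]
    simp only [e0, e1, e2, e3, e4, nu, (show (24*K+21) % 24 = 21 by omega), (show (24*K+21+4) % 24 = 1 by omega), (show (24*K+21) % 3 = 0 by omega), (show (24*K+21+1) % 3 = 1 by omega), (show (24*K+21+2) % 3 = 2 by omega), (show (24*K+21+3) % 3 = 0 by omega), (show (6*K+5) % 3 = 2 by omega)]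
    norm_num
    try ring
  · obtain ⟨K, rfl⟩ : ∃ K, N = 24*K+22 := ⟨N/24, by omega⟩
    have hd : (24*K+22)/4 = 6*K+5 := by omega
    have e0 : sigma2 (24*K+22) = sigma2 (6*K+5) + 1 := by rw [show 24*K+22 = 4*(6*K+5)+2 by ring, key2]
    have e1 : sigma2 (24*K+22+1) = sigma2 (6*K+5) + 2 := by rw [show 24*K+22+1 = 4*(6*K+5)+3 by ring, key3]
    have e2 : sigma2 (24*K+22+2) = sigma2 (6*K+6) := by rw [show 24*K+22+2 = 4*(6*K+6) by ring, key0]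
    have e3 : sigma2 (24*K+22+3) = sigma2 (6*K+6) + 1 := by rw [show 24*K+22+3 = 4*(6*K+6)+1 by ring, key1]
    have e4 : sigma2 (24*K+22+4) = sigma2 (6*K+6) + 1 := by rw [show 24*K+22+4 = 4*(6*K+6)+2 by ring, key2]
    rw [S_add_four, hd, S_succ 3 0 (6*K+5)]
    simp only [e0, e1, e2, e3, e4, nu, (show (24*K+22) % 24 = 22 by omega), (show (24*K+22+4) % 24 = 2 by omega), (show (24*K+22) % 3 = 1 by omega), (show (24*K+22+1) % 3 = 2 by omega), (show (24*K+22+2) % 3 = 0 by omega), (show (24*K+22+3) % 3 = 1 by omega), (show (6*K+5) % 3 = 2 by omega)]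
    norm_num
    try ring
  · obtain ⟨K, rfl⟩ : ∃ K, N = 24*K+23 := ⟨N/24, by omega⟩
    have hd : (24*K+23)/4 = 6*K+5 := by omega
    have e0 : sigma2 (24*K+23) = sigma2 (6*K+5) + 2 := by rw [show 24*K+23 = 4*(6*K+5)+3 by ring, key3]
    have e1 : sigma2 (24*K+23+1) = sigma2 (6*K+6) := by rw [show 24*K+23+1 = 4*(6*K+6) by ring, key0]
    have e2 : sigma2 (24*K+23+2) = sigma2 (6*K+6) + 1 := by rw [show 24*K+23+2 = 4*(6*K+6)+1 by ring, key1]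
    have e3 : sigma2 (24*K+23+3) = sigma2 (6*K+6) + 1 := by rw [show 24*K+23+3 = 4*(6*K+6)+2 by ring, key2]
    have e4 : sigma2 (24*K+23+4) = sigma2 (6*K+6) + 2 := by rw [show 24*K+23+4 = 4*(6*K+6)+3 by ring, key3]
    rw [S_add_four, hd, S_succ 3 0 (6*K+5)]
    simp only [e0, e1, e2, e3, e4, nu, (show (24*K+23) % 24 = 23 by omega), (show (24*K+23+4) % 24 = 3 by omega), (show (24*K+23) % 3 = 2 by omega), (show (24*K+23+1) % 3 = 0 by omega), (show (24*K+23+2) % 3 = 1 by omega), (show (24*K+23+3) % 3 = 2 by omega), (show (6*K+5) % 3 = 2 by omega)]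
    norm_num
    try ring
theorem stmt_19 (N : ℕ) (hN : 0 < N) :
    S 3 0 N = 3 * S 3 0 (N / 4) + nu N := by
  clear hN
  induction N using Nat.strong_induction_on with
  | _ n ih =>
    by_cases h : n < 4
    · have hS0 : S 3 0 0 = 0 := by simp [S]
      have h1 : S 3 0 1 = 1 := by
        rw [show (1:ℕ) = 0+1 from rfl, S_succ, hS0]; norm_num [s2_0]
      have h2 : S 3 0 2 = 1 := by
        rw [show (2:ℕ) = 1+1 from rfl, S_succ, h1]; norm_num
      have h3 : S 3 0 3 = 1 := by
        rw [show (3:ℕ) = 2+1 from rfl, S_succ, h2]; norm_num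
      interval_cases n
      · rw [hS0]; norm_num [nu]
      · norm_num [h1, hS0, nu, s2_1]
      · norm_num [h2, h1, hS0, nu, s2_2]
      · norm_num [h3, hS0, nu, s2_3]
    · obtain ⟨p, rfl⟩ : ∃ p, n = p + 4 := ⟨n-4, by omega⟩
      rw [step p, ih p (by omega), show (p+4)/4 = p/4+1 by omega]
      ring
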